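/- Let p and n be positive integers with n ≥ 3p+1. Then the clique cover number of the p-th power of the cycle C_n equals n. -/

import Mathlib

open SimpleGraph

/-- A finite collection of cliques of `G` covering every edge of `G`. -/
def IsEdgeCliqueCover {V : Type*} (G : SimpleGraph V) (𝒞 : Finset (Set V)) : Prop :=
  (∀ C ∈ 𝒞, G.IsClique C) ∧ ∀ ⦃u v : V⦄, G.Adj u v → ∃ C ∈ 𝒞, u ∈ C ∧ v ∈ C

/-- The (edge) clique cover number of `G`: the least size of an edge clique covering. -/
noncomputable def edgeCliqueCoverNumber {V : Type*} (G : SimpleGraph V) : ℕ :=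
  sInf {k | ∃ 𝒞 : Finset (Set V), IsEdgeCliqueCover G 𝒞 ∧ 𝒞.card = k}

/-- The `p`-th power of the cycle `C_n`: vertices are `ZMod n`, and `u` is adjacent to `v`
iff `u - v` or `v - u` (mod `n`) lies in `{1, …, p}`. -/
def cyclePower (n p : ℕ) : SimpleGraph (ZMod n) where
  Adj u v := u ≠ v ∧ ∃ k : ℕ, 1 ≤ k ∧ k ≤ p ∧ (u - v = (k : ZMod n) ∨ v - u = (k : ZMod n))
  symm := by
    constructor
    rintro u v ⟨hne, k, hk1, hk2, hk⟩
    exact ⟨hne.symm, k, hk1, hk2, hk.symm⟩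
  loopless := by
    constructor
    rintro u ⟨hne, -⟩
    exact hne rfl

/-- For positive integers `p, n` with `n ≥ 3p + 1`, the clique cover number of the `p`-th power
of the cycle `C_n` equals `n`. -/
-- key lemma: a clique containing i and i+p lies in the interval [i, i+p]
lemma key_interval (p n : ℕ) [NeZero n] (hp : 1 ≤ p) (hn : 3 * p + 1 ≤ n)
    {C : Set (ZMod n)} (hC : (cyclePower n p).IsClique C)
    {i x : ZMod n} (hi : i ∈ C) (hip : i + (p : ZMod n) ∈ C) (hx : x ∈ C) :
    (x - i).val ≤ p := by
  by_cases h1 : x = i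
  · simp [h1]
  by_cases h2 : x = i + (p : ZMod n)
  · have : x - i = (p : ZMod n) := by rw [h2]; ring
    rw [this, ZMod.val_cast_of_lt (by omega)]
  obtain ⟨-, k, hk1, hk2, hk⟩ := hC hx hi h1
  rcases hk with hk | hk
  · rw [hk, ZMod.val_cast_of_lt (by omega)]; exact hk2
  · -- i - x = k, so x is "below" i; contradict adjacency to i+p
    obtain ⟨-, k', hk'1, hk'2, hk'⟩ := hC hx hip h2
    exfalso
    rcases hk' with hk' | hk'
    · -- x - (i+p) = k', but x - (i+p) = -(k+p)
      have : ((k' + k + p : ℕ) : ZMod n) = 0 := by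
        push_cast
        have e1 : (k : ZMod n) = i - x := hk.symm
        have e2 : (k' : ZMod n) = x - (i + (p : ZMod n)) := hk'.symm
        rw [e1, e2]; ring
      have hd := (ZMod.natCast_eq_zero_iff _ _).mp this
      have := Nat.le_of_dvd (by omega) hd
      omega
    · -- (i+p) - x = k', but (i+p) - x = k + p
      have : ((k + p : ℕ) : ZMod n) = (k' : ℕ) := by
        push_cast
        have e1 : (k : ZMod n) = i - x := hk.symm
        rw [e1, ← hk']; ring
      have := congrArg ZMod.val this
      rw [ZMod.val_cast_of_lt (by omega), ZMod.val_cast_of_lt (by omega)] at this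
      omega

theorem stmt_1 (p n : ℕ) (hp : 1 ≤ p) (hn : 3 * p + 1 ≤ n) :
    edgeCliqueCoverNumber (cyclePower n p) = n := by
  haveI : NeZero n := ⟨by omega⟩
  classical
  -- lower bound: any cover has card ≥ n
  have lower : ∀ 𝒞 : Finset (Set (ZMod n)), IsEdgeCliqueCover (cyclePower n p) 𝒞 →
      n ≤ 𝒞.card := by
    intro 𝒞 ⟨hclique, hcov⟩
    have hadj : ∀ i : ZMod n, (cyclePower n p).Adj i (i + (p : ZMod n)) := by
      intro i
      refine ⟨fun h => ?_, p, hp, le_refl p, Or.inr (by ring)⟩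
      have : (p : ZMod n) = 0 := by
        have := congrArg (fun z => z - i) h
        simpa using this.symm
      have := congrArg ZMod.val this
      rw [ZMod.val_cast_of_lt (by omega), ZMod.val_zero] at this
      omega
    choose f hfmem hf1 hf2 using fun i : ZMod n => hcov (hadj i)
    have hinj : Function.Injective f := by
      intro i j hij
      have hjC : j ∈ f i := by rw [hij]; exact hf1 j
      have hjpC : j + (p : ZMod n) ∈ f i := by rw [hij]; exact hf2 j
      have h1 := key_interval p n hp hn (hclique _ (hfmem i)) (hf1 i) (hf2 i) hjC
      have h2 := key_interval p n hp hn (hclique _ (hfmem i)) (hf1 i) (hf2 i) hjpC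
      set t := (j - i).val with ht
      have e : (j + (p : ZMod n)) - i = ((t + p : ℕ) : ZMod n) := by
        push_cast
        rw [ht, ZMod.natCast_zmod_val]; ring
      rw [e, ZMod.val_cast_of_lt (by have := (j - i).val_lt; omega)] at h2
      have ht0 : t = 0 := by omega
      have : j - i = 0 := by
        rw [← ZMod.natCast_zmod_val (j - i), ← ht, ht0]; simp
      have := sub_eq_zero.mp this
      exact this.symm ▸ rfl
    calc n = Fintype.card (ZMod n) := (ZMod.card n).symm
      _ ≤ 𝒞.card := by
        apply Finset.card_le_card_of_injOn f (fun i _ => hfmem i)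
        exact hinj.injOn
  -- upper bound: intervals
  set I : ZMod n → Set (ZMod n) := fun i => {x | (x - i).val ≤ p} with hI
  have hcover : IsEdgeCliqueCover (cyclePower n p) (Finset.univ.image I) := by
    constructor
    · intro C hC
      obtain ⟨i, -, rfl⟩ := Finset.mem_image.mp hC
      intro x hx y hy hne
      simp only [hI, Set.mem_setOf_eq] at hx hy
      refine ⟨hne, ?_⟩
      set a := (x - i).val with ha
      set b := (y - i).val with hb
      have hxa : x - i = (a : ZMod n) := (ZMod.natCast_zmod_val _).symm
      have hyb : y - i = (b : ZMod n) := (ZMod.natCast_zmod_val _).symm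
      have hab : a ≠ b := by
        intro h
        apply hne
        have : x - i = y - i := by rw [hxa, hyb, h]
        have := sub_left_injective this
        exact this
      rcases Nat.lt_or_ge a b with hlt | hge
      · refine ⟨b - a, by omega, by omega, Or.inr ?_⟩
        have : y - x = (y - i) - (x - i) := by ring
        rw [this, hxa, hyb]
        have : ((b - a : ℕ) : ZMod n) = (b : ZMod n) - (a : ZMod n) := by
          push_cast [Nat.cast_sub (le_of_lt hlt)]; ring
        rw [this]
      · refine ⟨a - b, by omega, by omega, Or.inl ?_⟩
        have : x - y = (x - i) - (y - i) := by ring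
        rw [this, hxa, hyb]
        have : ((a - b : ℕ) : ZMod n) = (a : ZMod n) - (b : ZMod n) := by
          push_cast [Nat.cast_sub hge]; ring
        rw [this]
    · rintro u v ⟨hne, k, hk1, hk2, hk⟩
      rcases hk with hk | hk
      · refine ⟨I v, Finset.mem_image_of_mem I (Finset.mem_univ v), ?_, ?_⟩
        · simp only [hI, Set.mem_setOf_eq, hk, ZMod.val_cast_of_lt (by omega : k < n)]
          exact hk2
        · simp [hI]
      · refine ⟨I u, Finset.mem_image_of_mem I (Finset.mem_univ u), ?_, ?_⟩
        · simp [hI]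
        · simp only [hI, Set.mem_setOf_eq, hk, ZMod.val_cast_of_lt (by omega : k < n)]
          exact hk2
  have hcardle : (Finset.univ.image I).card ≤ n := by
    calc (Finset.univ.image I).card ≤ (Finset.univ : Finset (ZMod n)).card :=
          Finset.card_image_le
      _ = n := by simp [ZMod.card]
  have hcardeq : (Finset.univ.image I).card = n :=
    le_antisymm hcardle (lower _ hcover)
  have hmem : n ∈ {k | ∃ 𝒞 : Finset (Set (ZMod n)), IsEdgeCliqueCover (cyclePower n p) 𝒞 ∧ 𝒞.card = k} :=
    ⟨_, hcover, hcardeq⟩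
  refine le_antisymm (Nat.sInf_le hmem) (le_csInf ⟨n, hmem⟩ ?_)
  rintro k ⟨𝒞, hc, rfl⟩
  exact lower 𝒞 hc
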